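/- arXiv:1705.03851 — 2 statements merged into one kernel-verified Lean document; each statement's English description precedes it below -/
import Mathlib

section
/- Let T: 𝕋 → 𝕋 be continuous with finite fibers, X ⊆ 𝕋 a perfect set with T(X) ⊆ X, and a, b ∈ X with T(a) = b. Then there exist strictly monotone sequences (aₙ) in X and (bₙ) in 𝕋 with aₙ → a, bₙ → b, and T(aₙ) = bₙ for all n. -/
open Set Filter MeasureTheory

noncomputable def rep (z : UnitAddCircle) : ℝ := (AddCircle.equivIco 1 0 z : ℝ)

def MinimalOn (T : UnitAddCircle → UnitAddCircle) (X : Set UnitAddCircle) : Prop :=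
  ∀ x ∈ X, ∀ y ∈ X, y ∈ closure {z : UnitAddCircle | ∃ n : ℕ, T^[n] x = z}

def PreservesCyclicOrder (T : UnitAddCircle → UnitAddCircle) (X : Set UnitAddCircle) : Prop :=
  ∀ p ∈ X, ∀ q ∈ X, ∀ r ∈ X,
    T p ≠ T q → T q ≠ T r → T r ≠ T p →
    sbtw p q r → sbtw (T p) (T q) (T r)

def IsRotational (T : UnitAddCircle → UnitAddCircle) (X : Set UnitAddCircle) : Prop :=
  IsClosed X ∧ Set.MapsTo T X X ∧ MinimalOn T X ∧ PreservesCyclicOrder T X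


open Topology

noncomputable def Lft (x : ℝ) (z : UnitAddCircle) : ℝ :=
  (AddCircle.equivIoc 1 (x - 2⁻¹) z : ℝ)

lemma Lft_coe (x : ℝ) (z : UnitAddCircle) : ((Lft x z : ℝ) : UnitAddCircle) = z :=
  (AddCircle.equivIoc 1 (x - 2⁻¹)).symm_apply_apply z

lemma Lft_self (x : ℝ) : Lft x ((x:ℝ) : UnitAddCircle) = x := by
  unfold Lft
  have hx : x ∈ Ioc (x - 2⁻¹) (x - 2⁻¹ + 1) := ⟨by linarith, by linarith⟩
  have : (AddCircle.equivIoc 1 (x - 2⁻¹)) x = ⟨x, hx⟩ := by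
    rw [Equiv.apply_eq_iff_eq_symm_apply]; rfl
  rw [this]

lemma Lft_contAt (x : ℝ) : ContinuousAt (Lft x) ((x:ℝ) : UnitAddCircle) := by
  apply ContinuousAt.comp continuous_subtype_val.continuousAt
  apply AddCircle.continuousAt_equivIoc
  intro h
  rw [AddCircle.coe_eq_coe_iff_of_mem_Ico (a := x - 2⁻¹) (p := 1)
    ⟨by norm_num, by linarith⟩ ⟨le_refl _, by linarith⟩] at h
  linarith

lemma mono_subseq_below {g : ℕ → ℝ} {x : ℝ} (hg : Tendsto g atTop (nhds x))
    (hfreq : ∃ᶠ n in atTop, g n < x) :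
    ∃ φ : ℕ → ℕ, StrictMono φ ∧ StrictMono (g ∘ φ) := by
  have key : ∀ m : ℕ, g m < x → ∃ n, m < n ∧ g m < g n ∧ g n < x := by
    intro m hm
    have h1 : ∀ᶠ n in atTop, g m < g n := hg.eventually (eventually_gt_nhds hm)
    have := (hfreq.and_eventually (h1.and (eventually_gt_atTop m))).exists
    obtain ⟨n, hn1, hn2, hn3⟩ := this
    exact ⟨n, hn3, hn2, hn1⟩
  obtain ⟨m₀, hm₀⟩ := hfreq.exists
  let F : {m : ℕ // g m < x} → {m : ℕ // g m < x} := fun m =>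
    ⟨(key m m.2).choose, (key m m.2).choose_spec.2.2⟩
  let Φ : ℕ → {m : ℕ // g m < x} := fun k => F^[k] ⟨m₀, hm₀⟩
  have hstep : ∀ k, Φ k < Φ (k+1) ∧ g (Φ k) < g (Φ (k+1)) := by
    intro k
    have : Φ (k+1) = F (Φ k) := Function.iterate_succ_apply' F k _
    rw [this]
    exact ⟨(key _ (Φ k).2).choose_spec.1, (key _ (Φ k).2).choose_spec.2.1⟩
  refine ⟨fun k => (Φ k).1, strictMono_nat_of_lt_succ (fun k => (hstep k).1),
    strictMono_nat_of_lt_succ (fun k => (hstep k).2)⟩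

lemma mono_subseq {g : ℕ → ℝ} {x : ℝ} (hne : ∀ n, g n ≠ x)
    (hg : Tendsto g atTop (nhds x)) :
    ∃ φ : ℕ → ℕ, StrictMono φ ∧ (StrictMono (g ∘ φ) ∨ StrictAnti (g ∘ φ)) := by
  by_cases h : ∃ᶠ n in atTop, g n < x
  · obtain ⟨φ, h1, h2⟩ := mono_subseq_below hg h
    exact ⟨φ, h1, Or.inl h2⟩
  · have hev : ∀ᶠ n in atTop, x < g n := by
      have := not_frequently.mp h
      filter_upwards [this] with n hn
      exact lt_of_le_of_ne (not_lt.mp hn) (Ne.symm (hne n))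
    have hfreq : ∃ᶠ n in atTop, (fun n => -g n) n < -x := by
      apply hev.frequently.mono
      intro n hn; simpa using hn
    obtain ⟨φ, h1, h2⟩ := mono_subseq_below (hg.neg) hfreq
    refine ⟨φ, h1, Or.inr ?_⟩
    intro i j hij
    have := h2 hij
    simp only [Function.comp] at this ⊢
    linarith

theorem perturbation_lemma
    (T : UnitAddCircle → UnitAddCircle) (hT : Continuous T)
    (hfib : ∀ y : UnitAddCircle, (T ⁻¹' {y}).Finite)
    (X : Set UnitAddCircle) (hX : Perfect X) (hinv : Set.MapsTo T X X)
    (a b : UnitAddCircle) (ha : a ∈ X) (hab : T a = b) :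
    ∃ u v : ℕ → ℝ,
      (StrictMono u ∨ StrictAnti u) ∧ (StrictMono v ∨ StrictAnti v) ∧
      (∀ n, ((u n : ℝ) : UnitAddCircle) ∈ X) ∧
      (∀ n, T ((u n : ℝ) : UnitAddCircle) = ((v n : ℝ) : UnitAddCircle)) ∧
      (∃ x : ℝ, ((x : ℝ) : UnitAddCircle) = a ∧ Tendsto u atTop (nhds x)) ∧
      (∃ y : ℝ, ((y : ℝ) : UnitAddCircle) = b ∧ Tendsto v atTop (nhds y)) := by
  obtain ⟨x, -, hx⟩ := AddCircle.eq_coe_Ico a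
  obtain ⟨y, -, hy⟩ := AddCircle.eq_coe_Ico b
  -- a sequence in X \ {a} tending to a
  have hacc : AccPt a (𝓟 X) := hX.acc a ha
  have hfilt : (𝓝[X \ {a}] a).NeBot := by
    have hset : X \ {a} = {a}ᶜ ∩ X := by ext z; simp [Set.mem_diff, and_comm]
    unfold AccPt at hacc
    rw [hset, nhdsWithin_inter']
    exact hacc
  obtain ⟨c₀, hc₀⟩ := (𝓝[X \ {a}] a).exists_seq_tendsto
  rw [tendsto_nhdsWithin_iff] at hc₀
  obtain ⟨hc₀lim, hc₀mem⟩ := hc₀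
  obtain ⟨N₀, hN₀⟩ := eventually_atTop.mp hc₀mem
  set c : ℕ → UnitAddCircle := fun n => c₀ (n + N₀) with hc_def
  have hcX : ∀ n, c n ∈ X \ {a} := fun n => hN₀ (n + N₀) (Nat.le_add_left _ _)
  have hclim : Tendsto c atTop (𝓝 a) :=
    hc₀lim.comp (tendsto_add_atTop_nat N₀)
  -- lift to reals
  set u₀ : ℕ → ℝ := fun n => Lft x (c n) with hu₀_def
  have hu₀coe : ∀ n, ((u₀ n : ℝ) : UnitAddCircle) = c n := fun n => Lft_coe x (c n)
  have hu₀lim : Tendsto u₀ atTop (𝓝 x) := by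
    have h1 : Tendsto c atTop (𝓝 ((x:ℝ) : UnitAddCircle)) := hx ▸ hclim
    have := (Lft_contAt x).tendsto.comp h1
    rwa [Lft_self x] at this
  have hu₀ne : ∀ n, u₀ n ≠ x := by
    intro n h
    have : c n = a := by rw [← hu₀coe n, h, hx]
    exact (hcX n).2 (Set.mem_singleton_iff.mpr this)
  obtain ⟨φ, hφ, hφmono⟩ := mono_subseq hu₀ne hu₀lim
  -- injectivity of c ∘ φ
  have hinj : Function.Injective (fun n => c (φ n)) := by
    intro m n h
    have h' : c (φ m) = c (φ n) := h
    have h2 : (u₀ ∘ φ) m = (u₀ ∘ φ) n := congrArg (Lft x) h'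
    rcases hφmono with hm | hm
    · exact hm.injective h2
    · exact hm.injective h2
  -- finitely many n with T (c (φ n)) = b
  have hfin : {n : ℕ | T (c (φ n)) = b}.Finite := by
    have : {n : ℕ | T (c (φ n)) = b} = (fun n => c (φ n)) ⁻¹' (T ⁻¹' {b}) := rfl
    rw [this]
    exact Set.Finite.preimage hinj.injOn (hfib b)
  obtain ⟨N₁, hN₁⟩ : ∃ N₁ : ℕ, ∀ n, N₁ ≤ n → T (c (φ n)) ≠ b := by
    obtain ⟨N, hN⟩ := hfin.bddAbove
    exact ⟨N + 1, fun n hn h => by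
      have := hN h
      omega⟩
  -- shifted sequences
  set ψ : ℕ → ℕ := fun n => φ (n + N₁) with hψ_def
  have hψmonoφ : StrictMono ψ := hφ.comp (fun i j h => by omega)
  set u₁ : ℕ → ℝ := fun n => u₀ (ψ n) with hu₁_def
  have hu₁mono : StrictMono u₁ ∨ StrictAnti u₁ := by
    rcases hφmono with hm | hm
    · exact Or.inl (fun i j h => hm (show i + N₁ < j + N₁ by omega))
    · exact Or.inr (fun i j h => hm (show i + N₁ < j + N₁ by omega))
  set d : ℕ → UnitAddCircle := fun n => T (c (ψ n)) with hd_def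
  have hdne : ∀ n, d n ≠ b := fun n => hN₁ (n + N₁) (Nat.le_add_left _ _)
  have hdlim : Tendsto d atTop (𝓝 b) := by
    have h1 : Tendsto (fun n => c (ψ n)) atTop (𝓝 a) :=
      hclim.comp hψmonoφ.tendsto_atTop
    have := (hT.tendsto a).comp h1
    rwa [hab] at this
  -- lift image sequence
  set v₀ : ℕ → ℝ := fun n => Lft y (d n) with hv₀_def
  have hv₀coe : ∀ n, ((v₀ n : ℝ) : UnitAddCircle) = d n := fun n => Lft_coe y (d n)
  have hv₀lim : Tendsto v₀ atTop (𝓝 y) := by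
    have h1 : Tendsto d atTop (𝓝 ((y:ℝ) : UnitAddCircle)) := hy ▸ hdlim
    have := (Lft_contAt y).tendsto.comp h1
    rwa [Lft_self y] at this
  have hv₀ne : ∀ n, v₀ n ≠ y := by
    intro n h
    apply hdne n
    rw [← hv₀coe n, h, hy]

  obtain ⟨σ, hσ, hσmono⟩ := mono_subseq hv₀ne hv₀lim
  refine ⟨u₁ ∘ σ, v₀ ∘ σ, ?_, hσmono, ?_, ?_, ⟨x, hx, ?_⟩, ⟨y, hy, ?_⟩⟩
  · rcases hu₁mono with hm | hm
    · exact Or.inl (hm.comp hσ)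
    · exact Or.inr (hm.comp_strictMono hσ)
  · intro n
    show ((u₀ (ψ (σ n)) : ℝ) : UnitAddCircle) ∈ X
    rw [hu₀coe]
    exact (hcX _).1
  · intro n
    show T ((u₀ (ψ (σ n)) : ℝ) : UnitAddCircle) = ((v₀ (σ n) : ℝ) : UnitAddCircle)
    rw [hu₀coe, hv₀coe]
  · exact (hu₀lim.comp (hψmonoφ.comp hσ).tendsto_atTop)
  · exact hv₀lim.comp hσ.tendsto_atTop
end

section
/- Let T: 𝕋 → 𝕋 be continuous with finite fibers, and X ⊂ 𝕋 an infinite rotational proper subset for T. Then for every y ∈ X, the fiber (T|_X)⁻¹{y} has cardinality at most two. -/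
open Set Filter MeasureTheory

open Topology

lemma rep_coe (x : ℝ) : rep (x : UnitAddCircle) = Int.fract x := by
  rw [rep, AddCircle.coe_equivIco_mk_apply]; simp

lemma rep_mem (z : UnitAddCircle) : rep z ∈ Set.Ico (0:ℝ) 1 := by
  have := (AddCircle.equivIco 1 0 z).2; simpa [rep] using this

lemma coe_rep (z : UnitAddCircle) : ((rep z : ℝ) : UnitAddCircle) = z :=
  (AddCircle.equivIco 1 0).symm_apply_apply z

lemma rep_zero : rep 0 = 0 := by
  have : ((0:ℝ) : UnitAddCircle) = 0 := by simp
  rw [← this, rep_coe]; simp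

lemma rep_inj {z w : UnitAddCircle} (h : rep z = rep w) : z = w := by
  rw [← coe_rep z, ← coe_rep w, h]

lemma rep_eq_zero_iff {z : UnitAddCircle} : rep z = 0 ↔ z = 0 := by
  constructor
  · intro h; rw [← coe_rep z, h]; simp
  · rintro rfl; exact rep_zero

lemma fract_congr {x y : ℝ} (h : ∃ z : ℤ, x - y = z) : Int.fract x = Int.fract y := by
  obtain ⟨z, hz⟩ := h
  have : x = y + z := by linarith
  rw [this, Int.fract_add_intCast]

lemma fract_sub_le {s t : ℝ} (hs0 : 0 ≤ s) (hs1 : s < 1) (ht0 : 0 ≤ t) (h : t ≤ s) :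
    Int.fract (s - t) = s - t :=
  Int.fract_eq_self.mpr ⟨by linarith, by linarith⟩

lemma fract_sub_gt {s t : ℝ} (hs0 : 0 ≤ s) (ht1 : t < 1) (h : s < t) :
    Int.fract (s - t) = s - t + 1 := by
  rw [← Int.fract_add_one (s - t)]
  exact Int.fract_eq_self.mpr ⟨by linarith, by linarith⟩

lemma ico1 (hp : (0:ℝ) < 1) (y : ℝ) : toIcoMod hp 0 y = Int.fract y := by
  rw [toIcoMod_eq_fract_mul]; simp

lemma modeq_iff_fract (y : ℝ) : (0:ℝ) ≡ y [PMOD (1:ℝ)] ↔ Int.fract y = 0 := by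
  rw [AddCommGroup.modEq_iff_zsmul']
  constructor
  · rintro ⟨z, hz⟩
    simp only [sub_zero, zsmul_eq_mul, mul_one] at hz
    rw [hz, Int.fract_intCast]
  · intro h
    refine ⟨⌊y⌋, ?_⟩
    have : y - ⌊y⌋ = 0 := h
    simp only [sub_zero, zsmul_eq_mul, mul_one]
    linarith

lemma ioc1 (hp : (0:ℝ) < 1) (y : ℝ) :
    toIocMod hp 0 y = if Int.fract y = 0 then 1 else Int.fract y := by
  by_cases h : Int.fract y = 0
  · rw [if_pos h]
    have := (AddCommGroup.modEq_iff_toIocMod_eq_right hp).mp ((modeq_iff_fract y).mpr h)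
    simpa using this
  · rw [if_neg h, ← ico1 hp, ← (AddCommGroup.not_modEq_iff_toIcoMod_eq_toIocMod hp).mp
      (fun hm => h ((modeq_iff_fract y).mp hm))]

lemma sbtw_iff_rep (u z v : UnitAddCircle) :
    sbtw u z v ↔ 0 < rep (z - u) ∧ rep (z - u) < rep (v - u) := by
  induction u using QuotientAddGroup.induction_on with | H a => ?_
  induction z using QuotientAddGroup.induction_on with | H b => ?_
  induction v using QuotientAddGroup.induction_on with | H c => ?_
  have hsub : ∀ s t : ℝ, (s : UnitAddCircle) - t = ((s - t : ℝ) : UnitAddCircle) := by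
    intro s t; norm_cast
  rw [sbtw_iff_btw_not_btw, QuotientAddGroup.btw_coe_iff', QuotientAddGroup.btw_coe_iff',
    ico1, ico1, ioc1, ioc1, hsub, hsub, rep_coe, rep_coe]
  set A := Int.fract (b - a) with hA
  set B := Int.fract (c - a) with hB
  have hA0 : 0 ≤ A := Int.fract_nonneg _
  have hA1 : A < 1 := Int.fract_lt_one _
  have hB0 : 0 ≤ B := Int.fract_nonneg _
  have hB1 : B < 1 := Int.fract_lt_one _
  have hCeq : Int.fract (b - c) = Int.fract (A - B) := by
    apply fract_congr
    refine ⟨⌊b - a⌋ - ⌊c - a⌋, ?_⟩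
    rw [hA, hB, Int.fract, Int.fract]; push_cast; ring
  have hDeq : Int.fract (a - c) = Int.fract (0 - B) := by
    apply fract_congr
    refine ⟨-⌊c - a⌋, ?_⟩
    rw [hB, Int.fract]; push_cast; ring
  by_cases hBz : B = 0
  · have hD : Int.fract (a - c) = 0 := by rw [hDeq, hBz]; simp
    rw [hD, if_pos rfl]
    constructor
    · rintro ⟨-, h2⟩; exact absurd (Int.fract_lt_one (b - c)).le h2
    · rintro ⟨h1, h2⟩; rw [hBz] at h2; linarith
  · have hBpos : 0 < B := lt_of_le_of_ne hB0 (Ne.symm hBz)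
    have hD : Int.fract (a - c) = 1 - B := by
      rw [hDeq, fract_sub_gt le_rfl hB1 hBpos]; ring
    have hDnz : ¬(1 - B = 0) := by intro h; linarith
    rw [hD, if_neg hBz, if_neg hDnz]
    rcases lt_trichotomy A B with hlt | heq | hgt
    · have hC : Int.fract (b - c) = A - B + 1 := by rw [hCeq, fract_sub_gt hA0 hB1 hlt]
      rw [hC]
      constructor
      · rintro ⟨-, h2⟩
        refine ⟨?_, hlt⟩
        by_contra hA'
        push_neg at hA'
        have : A = 0 := le_antisymm hA' hA0
        rw [this] at h2; simp at h2
      · rintro ⟨h1, -⟩; exact ⟨hlt.le, by intro h; linarith⟩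
    · have hC : Int.fract (b - c) = 0 := by rw [hCeq, ← heq]; simp
      rw [hC]
      constructor
      · rintro ⟨-, h2⟩; exact absurd (by linarith : (0:ℝ) ≤ 1 - B) h2
      · rintro ⟨-, h2⟩; rw [heq] at h2; linarith
    · have hC : Int.fract (b - c) = A - B := by rw [hCeq, fract_sub_le hA0 hA1 hB0 hgt.le]
      rw [hC]
      constructor
      · rintro ⟨h1, -⟩; linarith
      · rintro ⟨-, h2⟩; linarith

lemma rep_sub (w v : UnitAddCircle) : rep (w - v) = Int.fract (rep w - rep v) := by
  conv_lhs => rw [← coe_rep w, ← coe_rep v]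
  rw [show ((rep w : ℝ) : UnitAddCircle) - ((rep v : ℝ) : UnitAddCircle)
      = ((rep w - rep v : ℝ) : UnitAddCircle) by norm_cast, rep_coe]

lemma sbtw_iff_base (o x y z : UnitAddCircle) :
    sbtw x y z ↔ 0 < Int.fract (rep (y - o) - rep (x - o)) ∧
      Int.fract (rep (y - o) - rep (x - o)) < Int.fract (rep (z - o) - rep (x - o)) := by
  rw [sbtw_iff_rep, show y - x = (y - o) - (x - o) by abel, show z - x = (z - o) - (x - o) by abel,
    rep_sub (y - o) (x - o), rep_sub (z - o) (x - o)]

lemma isOpen_arc (u v : UnitAddCircle) : IsOpen {z | sbtw u z v} := by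
  rw [isOpen_iff_mem_nhds]
  intro z hz
  rw [mem_setOf_eq, sbtw_iff_rep] at hz
  have hzu : z - u ≠ ((0:ℝ) : UnitAddCircle) := by
    intro h
    rw [show ((0:ℝ) : UnitAddCircle) = 0 by simp] at h
    rw [h, rep_zero] at hz
    exact lt_irrefl _ hz.1
  have hcont : ContinuousAt (fun w : UnitAddCircle => rep (w - u)) z := by
    have h1 : ContinuousAt (fun w : UnitAddCircle => w - u) z :=
      (continuous_id.sub continuous_const).continuousAt
    have h2 : ContinuousAt (AddCircle.equivIco 1 0) ((fun w : UnitAddCircle => w - u) z) :=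
      AddCircle.continuousAt_equivIco 1 0 hzu
    have h4 := ContinuousAt.comp (f := fun w : UnitAddCircle => w - u) (x := z) h2 h1
    have h3 := ContinuousAt.comp (f := fun w : UnitAddCircle => AddCircle.equivIco 1 0 (w - u))
      (x := z) (continuous_subtype_val.continuousAt) h4
    exact h3
  have hmem : (fun w : UnitAddCircle => rep (w - u)) ⁻¹' (Set.Ioo 0 (rep (v - u))) ∈ 𝓝 z :=
    hcont.preimage_mem_nhds (isOpen_Ioo.mem_nhds ⟨hz.1, hz.2⟩)
  filter_upwards [hmem] with w hw
  rw [sbtw_iff_rep]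
  exact ⟨hw.1, hw.2⟩

lemma preimage_finite {T : UnitAddCircle → UnitAddCircle}
    (hfib : ∀ y : UnitAddCircle, (T ⁻¹' {y}).Finite) {S : Set UnitAddCircle} (hS : S.Finite) :
    (T ⁻¹' S).Finite := by
  have : T ⁻¹' S = ⋃ y ∈ S, T ⁻¹' {y} := by ext w; simp
  rw [this]
  exact hS.biUnion (fun y _ => hfib y)

lemma exists_acc {X : Set UnitAddCircle} (hinf : X.Infinite) :
    ∃ c, ∀ U ∈ 𝓝 c, (U ∩ X).Infinite := by
  by_contra h
  push_neg at h
  choose U hU hfin using h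
  obtain ⟨t, -, ht⟩ := isCompact_univ.elim_nhds_subcover U (fun x _ => hU x)
  refine hinf ?_
  have : X ⊆ ⋃ x ∈ t, (U x ∩ X) := by
    intro z hz
    have : z ∈ ⋃ x ∈ t, U x := ht (mem_univ z)
    simp only [mem_iUnion] at this ⊢
    obtain ⟨x, hx, hzx⟩ := this
    exact ⟨x, hx, hzx, hz⟩
  exact ((t.finite_toSet.biUnion (fun x _ => hfin x)).subset this)

lemma acc_transfer {T : UnitAddCircle → UnitAddCircle} (hT : Continuous T)
    (hfib : ∀ y : UnitAddCircle, (T ⁻¹' {y}).Finite) {X : Set UnitAddCircle}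
    (hmaps : Set.MapsTo T X X) {c : UnitAddCircle}
    (hacc : ∀ U ∈ 𝓝 c, (U ∩ X).Infinite) : ∀ U ∈ 𝓝 (T c), (U ∩ X).Infinite := by
  intro U hU
  have h1 : T ⁻¹' U ∈ 𝓝 c := hT.continuousAt.preimage_mem_nhds hU
  have h2 := hacc _ h1
  intro hfin
  refine h2 ?_
  have hsub : T ⁻¹' U ∩ X ⊆ T ⁻¹' (U ∩ X) := fun x hx => ⟨hx.1, hmaps hx.2⟩
  exact ((preimage_finite hfib hfin).subset hsub)

lemma all_acc {T : UnitAddCircle → UnitAddCircle} (hT : Continuous T)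
    (hfib : ∀ y : UnitAddCircle, (T ⁻¹' {y}).Finite) {X : Set UnitAddCircle}
    (hX : IsClosed X) (hmaps : Set.MapsTo T X X) (hmin : MinimalOn T X) (hinf : X.Infinite) :
    ∀ x ∈ X, ∀ U ∈ 𝓝 x, (U ∩ X).Infinite := by
  obtain ⟨c, hacc⟩ := exists_acc hinf
  have hcX : c ∈ X := by
    rw [← hX.closure_eq]
    rw [mem_closure_iff_nhds]
    intro U hU
    obtain ⟨z, hz⟩ := (hacc U hU).nonempty
    exact ⟨z, hz⟩
  have horb_mem : ∀ n, T^[n] c ∈ X := by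
    intro n
    induction n with
    | zero => exact hcX
    | succ n ih => rw [Function.iterate_succ_apply']; exact hmaps ih
  have horb_acc : ∀ n, ∀ U ∈ 𝓝 (T^[n] c), (U ∩ X).Infinite := by
    intro n
    induction n with
    | zero => exact hacc
    | succ n ih =>
      rw [Function.iterate_succ_apply']
      exact acc_transfer hT hfib hmaps ih
  intro x hx U hU
  intro hfin
  have hVnhds : U ∩ ((U ∩ X) \ {x})ᶜ ∈ 𝓝 x := by
    refine inter_mem hU ?_
    refine (hfin.diff (t := _)).isClosed.isOpen_compl.mem_nhds ?_
    simp
  have hclos := hmin c hcX x hx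
  rw [mem_closure_iff_nhds] at hclos
  obtain ⟨z, hz1, n, hz2⟩ := hclos _ hVnhds
  have hzX : z ∈ X := hz2 ▸ horb_mem n
  have hzx : z = x := by
    by_contra hne
    exact hz1.2 ⟨⟨hz1.1, hzX⟩, hne⟩
  exact horb_acc n U (by rw [hz2, hzx]; exact hU) hfin

lemma contra {T : UnitAddCircle → UnitAddCircle} {X : Set UnitAddCircle}
    (hpres : PreservesCyclicOrder T X) {y a b u v : UnitAddCircle}
    (haX : a ∈ X) (hbX : b ∈ X) (huX : u ∈ X) (hvX : v ∈ X)
    (hTu : T u = y) (hTv : T v = y) (hTa : T a ≠ y) (hTb : T b ≠ y) (hab : T a ≠ T b)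
    (h1 : sbtw a u b) (h2 : sbtw b v a) : False := by
  have s1 := hpres a haX u huX b hbX (by rw [hTu]; exact hTa)
    (by rw [hTu]; exact fun h => hTb h.symm) (Ne.symm hab) h1
  have s2 := hpres b hbX v hvX a haX (by rw [hTv]; exact hTb)
    (by rw [hTv]; exact fun h => hTa h.symm) hab h2
  rw [hTu] at s1
  rw [hTv] at s2
  exact sbtw_asymm s1 s2


lemma key (T : UnitAddCircle → UnitAddCircle) (hT : Continuous T)
    (hfib : ∀ y : UnitAddCircle, (T ⁻¹' {y}).Finite)
    (X : Set UnitAddCircle) (hX : IsClosed X) (hmaps : Set.MapsTo T X X)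
    (hmin : MinimalOn T X) (hpres : PreservesCyclicOrder T X)
    (hinf : X.Infinite) (y : UnitAddCircle)
    (p q r : UnitAddCircle) (hpX : p ∈ X) (hqX : q ∈ X) (hrX : r ∈ X)
    (hTp : T p = y) (hTq : T q = y) (hTr : T r = y)
    (hA : 0 < (rep (q - p))) (hAB : (rep (q - p)) < (rep (r - p))) : False := by
  have hacc := all_acc hT hfib hX hmaps hmin hinf
  have hP0 : rep (p - p) = 0 := by rw [sub_self, rep_zero]
  have hA0 : 0 ≤ (rep (q - p)) := (rep_mem _).1
  have hA1 : (rep (q - p)) < 1 := (rep_mem _).2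
  have hB0 : 0 ≤ (rep (r - p)) := (rep_mem _).1
  have hB1 : (rep (r - p)) < 1 := (rep_mem _).2
  have hBpos : 0 < (rep (r - p)) := lt_trans hA hAB
  obtain ⟨a, ha⟩ := (hinf.diff (hfib y)).nonempty
  have haX : a ∈ X := ha.1
  have haT : T a ≠ y := by simpa using ha.2
  have hva0 : 0 ≤ (rep (a - p)) := (rep_mem _).1
  have hva1 : (rep (a - p)) < 1 := (rep_mem _).2
  have corr_inj : ∀ w1 w2 : UnitAddCircle, rep (w1 - p) = rep (w2 - p) → w1 = w2 := by
    intro w1 w2 h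
    have := rep_inj h
    exact sub_left_injective this
  have hvap : 0 < (rep (a - p)) := by
    rcases eq_or_lt_of_le hva0 with h | h
    · exact absurd ((corr_inj a p (by rw [hP0, ← h])) ▸ hTp) haT
    · exact h
  have hvaq : (rep (a - p)) ≠ (rep (q - p)) := fun h => haT ((corr_inj a q h) ▸ hTq)
  have hvar : (rep (a - p)) ≠ (rep (r - p)) := fun h => haT ((corr_inj a r h) ▸ hTr)
  rcases lt_trichotomy (rep (a - p)) (rep (q - p)) with hcase | hcase | hcase
  · -- a in arc (p, q); O = arc (q, p) contains r
    have hrO : sbtw q r p := by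
      rw [sbtw_iff_base p, hP0, fract_sub_le hB0 hB1 hA0 hAB.le,
        fract_sub_gt (le_refl (0:ℝ)) hA1 hA]
      constructor <;> linarith
    have hOinf := hacc r hrX _ ((isOpen_arc q p).mem_nhds hrO)
    obtain ⟨b, hb⟩ := (hOinf.diff ((hfib y).union (hfib (T a)))).nonempty
    have hbX : b ∈ X := hb.1.2
    have hbT : T b ≠ y := fun h => hb.2 (Or.inl (by simpa using h))
    have hba : T b ≠ T a := fun h => hb.2 (Or.inr (by simpa using h))
    have hbO : sbtw q b p := hb.1.1
    have hvb0 : 0 ≤ (rep (b - p)) := (rep_mem _).1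
    have hvb1 : (rep (b - p)) < 1 := (rep_mem _).2
    rw [sbtw_iff_base p, hP0, fract_sub_gt (le_refl (0:ℝ)) hA1 hA] at hbO
    have hvbA : (rep (q - p)) < (rep (b - p)) := by
      rcases lt_trichotomy (rep (b - p)) (rep (q - p)) with h | h | h
      · rw [fract_sub_gt hvb0 hA1 h] at hbO
        linarith [hbO.2]
      · rw [h] at hbO
        simp at hbO
      · exact h
    have s1 : sbtw a q b := by
      rw [sbtw_iff_base p, fract_sub_le hA0 hA1 hva0 hcase.le,
        fract_sub_le hvb0 hvb1 hva0 (by linarith)]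
      constructor <;> linarith
    have s2 : sbtw b p a := by
      rw [sbtw_iff_base p, hP0, fract_sub_gt (le_refl (0:ℝ)) hvb1 (by linarith),
        fract_sub_gt hva0 hvb1 (by linarith)]
      constructor <;> linarith
    exact contra hpres haX hbX hqX hpX hTq hTp haT hbT (Ne.symm hba) s1 s2
  · exact hvaq hcase
  · rcases lt_trichotomy (rep (a - p)) (rep (r - p)) with hcase2 | hcase2 | hcase2
    · -- a in arc (q, r); O = arc (r, q) contains p
      have hpO : sbtw r p q := by
        rw [sbtw_iff_base p, hP0, fract_sub_gt (le_refl (0:ℝ)) hB1 hBpos,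
          fract_sub_gt hA0 hB1 hAB]
        constructor <;> linarith
      have hOinf := hacc p hpX _ ((isOpen_arc r q).mem_nhds hpO)
      obtain ⟨b, hb⟩ := (hOinf.diff ((hfib y).union (hfib (T a)))).nonempty
      have hbX : b ∈ X := hb.1.2
      have hbT : T b ≠ y := fun h => hb.2 (Or.inl (by simpa using h))
      have hba : T b ≠ T a := fun h => hb.2 (Or.inr (by simpa using h))
      have hbO : sbtw r b q := hb.1.1
      have hvb0 : 0 ≤ (rep (b - p)) := (rep_mem _).1
      have hvb1 : (rep (b - p)) < 1 := (rep_mem _).2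
      have hvbp : 0 < (rep (b - p)) := by
        rcases eq_or_lt_of_le hvb0 with h | h
        · exact absurd ((corr_inj b p (by rw [hP0, ← h])) ▸ hTp) hbT
        · exact h
      rw [sbtw_iff_base p, fract_sub_gt hA0 hB1 hAB] at hbO
      rcases lt_trichotomy (rep (b - p)) (rep (r - p)) with h | h | h
      · rw [fract_sub_gt hvb0 hB1 h] at hbO
        have hvbA : (rep (b - p)) < (rep (q - p)) := by linarith [hbO.2]
        have s1 : sbtw a r b := by
          rw [sbtw_iff_base p, fract_sub_le hB0 hB1 hva0 hcase2.le,
            fract_sub_gt hvb0 hva1 (by linarith)]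
          constructor <;> linarith
        have s2 : sbtw b q a := by
          rw [sbtw_iff_base p, fract_sub_le hA0 hA1 hvb0 (by linarith),
            fract_sub_le hva0 hva1 hvb0 (by linarith)]
          constructor <;> linarith
        exact contra hpres haX hbX hrX hqX hTr hTq haT hbT (Ne.symm hba) s1 s2
      · rw [h] at hbO
        simp at hbO
      · have s1 : sbtw a r b := by
          rw [sbtw_iff_base p, fract_sub_le hB0 hB1 hva0 hcase2.le,
            fract_sub_le hvb0 hvb1 hva0 (by linarith)]
          constructor <;> linarith
        have s2 : sbtw b p a := by
          rw [sbtw_iff_base p, hP0, fract_sub_gt (le_refl (0:ℝ)) hvb1 (by linarith),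
            fract_sub_gt hva0 hvb1 (by linarith)]
          constructor <;> linarith
        exact contra hpres haX hbX hrX hpX hTr hTp haT hbT (Ne.symm hba) s1 s2
    · exact hvar hcase2
    · -- a in arc (r, p); O = arc (p, r) contains q
      have hqO : sbtw p q r := by
        rw [sbtw_iff_base p, hP0, sub_zero, sub_zero,
          Int.fract_eq_self.mpr ⟨hA0, hA1⟩, Int.fract_eq_self.mpr ⟨hB0, hB1⟩]
        constructor <;> linarith
      have hOinf := hacc q hqX _ ((isOpen_arc p r).mem_nhds hqO)
      obtain ⟨b, hb⟩ := (hOinf.diff ((hfib y).union (hfib (T a)))).nonempty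
      have hbX : b ∈ X := hb.1.2
      have hbT : T b ≠ y := fun h => hb.2 (Or.inl (by simpa using h))
      have hba : T b ≠ T a := fun h => hb.2 (Or.inr (by simpa using h))
      have hbO : sbtw p b r := hb.1.1
      have hvb0 : 0 ≤ (rep (b - p)) := (rep_mem _).1
      have hvb1 : (rep (b - p)) < 1 := (rep_mem _).2
      rw [sbtw_iff_base p, hP0, sub_zero, sub_zero, Int.fract_eq_self.mpr ⟨hvb0, hvb1⟩,
        Int.fract_eq_self.mpr ⟨hB0, hB1⟩] at hbO
      have s1 : sbtw a p b := by
        rw [sbtw_iff_base p, hP0, fract_sub_gt (le_refl (0:ℝ)) hva1 (by linarith),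
          fract_sub_gt hvb0 hva1 (by linarith [hbO.2])]
        constructor <;> linarith [hbO.1]
      have s2 : sbtw b r a := by
        rw [sbtw_iff_base p, fract_sub_le hB0 hB1 hvb0 (by linarith [hbO.2]),
          fract_sub_le hva0 hva1 hvb0 (by linarith [hbO.2])]
        constructor <;> linarith [hbO.1, hbO.2]
      exact contra hpres haX hbX hpX hrX hTp hTr haT hbT (Ne.symm hba) s1 s2

theorem fibers_card_le_two
    (T : UnitAddCircle → UnitAddCircle) (hT : Continuous T)
    (hfib : ∀ y : UnitAddCircle, (T ⁻¹' {y}).Finite)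
    (X : Set UnitAddCircle) (hrot : IsRotational T X)
    (hinf : X.Infinite) (hproper : X ≠ Set.univ) :
    ∀ y ∈ X, ({x ∈ X | T x = y}).ncard ≤ 2 := by
  obtain ⟨hX, hmaps, hmin, hpres⟩ := hrot
  intro y hy
  by_contra hcard
  push_neg at hcard
  have hFfin : ({x ∈ X | T x = y}).Finite :=
    (hfib y).subset (fun x hx => by simpa using hx.2)
  rw [Set.two_lt_ncard hFfin] at hcard
  obtain ⟨p, hp, q0, hq0, r0, hr0, hpq, hpr, hqr⟩ := hcard
  have hpX : p ∈ X := hp.1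
  have hqX : q0 ∈ X := hq0.1
  have hrX : r0 ∈ X := hr0.1
  have hTp : T p = y := hp.2
  have hTq : T q0 = y := hq0.2
  have hTr : T r0 = y := hr0.2
  have hsub_ne : ∀ w : UnitAddCircle, w ≠ p → 0 < rep (w - p) := by
    intro w hw
    rcases eq_or_lt_of_le (rep_mem (w - p)).1 with h | h
    · exfalso
      apply hw
      have : w - p = 0 := rep_eq_zero_iff.mp h.symm
      exact sub_eq_zero.mp this
    · exact h
  have h0q : 0 < rep (q0 - p) := hsub_ne q0 (Ne.symm hpq)
  have h0r : 0 < rep (r0 - p) := hsub_ne r0 (Ne.symm hpr)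
  have hne : rep (q0 - p) ≠ rep (r0 - p) := by
    intro h
    exact hqr (sub_left_injective (rep_inj h))
  rcases hne.lt_or_gt with h | h
  · exact key T hT hfib X hX hmaps hmin hpres hinf y p q0 r0 hpX hqX hrX hTp hTq hTr h0q h
  · exact key T hT hfib X hX hmaps hmin hpres hinf y p r0 q0 hpX hrX hqX hTp hTr hTq h0r h
end
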